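/- Let q ≥ 2 and n ≥ 1 be integers, and let u, v ∈ F_q^n be vectors with Hamming distance d(u, v) = 1. Then for every natural number t ≥ 1, |B(u, t) ∪ B(v, t)| = 2 · Σ_{i=0}^{t} binom(n, i)(q−1)^i − q · Σ_{i=0}^{t−1} binom(n−1, i)(q−1)^i. -/

import Mathlib

open Finset in
private lemma fiber_card' {q n : ℕ} (u : Fin n → Fin q) (S T : Finset (Fin n)) (hST : S ⊆ T) :
    (Finset.univ.filter (fun x : Fin n → Fin q =>
      (T.filter (fun j => x j ≠ u j)) = S)).card = (q - 1) ^ S.card * q ^ (n - T.card) := by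
  have key : (Finset.univ.filter (fun x : Fin n → Fin q => (T.filter (fun j => x j ≠ u j)) = S))
      = Fintype.piFinset (fun j => if j ∈ S then ({u j}ᶜ : Finset (Fin q)) else if j ∈ T then {u j} else Finset.univ) := by
    ext x
    simp only [mem_filter, mem_univ, true_and, Fintype.mem_piFinset, Finset.ext_iff, mem_filter]
    constructor
    · intro h j
      have hj := h j
      split_ifs with h1 h2
      · simpa using (hj.mpr h1).2
      · simp only [mem_singleton]
        by_contra hne
        exact h1 (hj.mp ⟨h2, hne⟩)
      · simp
    · intro h j
      have hj := h j
      constructor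
      · rintro ⟨hjT, hne⟩
        by_contra h1
        rw [if_neg h1, if_pos hjT, mem_singleton] at hj
        exact hne hj
      · intro h1
        rw [if_pos h1] at hj
        simp only [mem_compl, mem_singleton] at hj
        exact ⟨hST h1, hj⟩
  rw [key, Fintype.card_piFinset]
  have hval : ∀ j : Fin n, (if j ∈ S then ({u j}ᶜ : Finset (Fin q)) else if j ∈ T then {u j} else Finset.univ).card
      = if j ∈ S then q - 1 else if j ∈ T then 1 else q := by
    intro j
    split_ifs <;> simp [Finset.card_compl]
  simp only [hval]
  rw [← Finset.prod_sdiff (Finset.subset_univ T), ← Finset.prod_sdiff hST]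
  have h1 : ∀ j ∈ Finset.univ \ T, (if j ∈ S then q - 1 else if j ∈ T then 1 else q) = q := by
    intro j hj
    simp only [mem_sdiff] at hj
    rw [if_neg (fun hs => hj.2 (hST hs)), if_neg hj.2]
  have h2 : ∀ j ∈ T \ S, (if j ∈ S then q - 1 else if j ∈ T then 1 else q) = 1 := by
    intro j hj
    simp only [mem_sdiff] at hj
    rw [if_neg hj.2, if_pos hj.1]
  have h3 : ∀ j ∈ S, (if j ∈ S then q - 1 else if j ∈ T then 1 else q) = q - 1 := by
    intro j hj; rw [if_pos hj]
  rw [Finset.prod_congr rfl h1, Finset.prod_congr rfl h2, Finset.prod_congr rfl h3]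
  simp [Finset.card_sdiff_of_subset (Finset.subset_univ T), mul_comm]

open Finset in
private lemma partial_ball_card' {q n : ℕ} (u : Fin n → Fin q) (T : Finset (Fin n)) (s : ℕ) :
    (Finset.univ.filter (fun x : Fin n → Fin q =>
      (T.filter (fun j => x j ≠ u j)).card ≤ s)).card =
    q ^ (n - T.card) * ∑ i ∈ Finset.range (s + 1), T.card.choose i * (q - 1) ^ i := by
  rw [Finset.card_eq_sum_card_fiberwise (f := fun x => T.filter (fun j => x j ≠ u j))
      (t := T.powerset.filter (fun S => S.card ≤ s))
      (fun x hx => by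
        simp only [Finset.mem_coe, mem_filter, mem_univ, true_and] at hx ⊢
        exact ⟨Finset.mem_powerset.mpr (Finset.filter_subset _ _), hx⟩)]
  have hfib : ∀ S ∈ T.powerset.filter (fun S => S.card ≤ s),
      ((Finset.univ.filter (fun x : Fin n → Fin q =>
        (T.filter (fun j => x j ≠ u j)).card ≤ s)).filter
        (fun x => T.filter (fun j => x j ≠ u j) = S)).card
      = (q - 1) ^ S.card * q ^ (n - T.card) := by
    intro S hS
    simp only [mem_filter, Finset.mem_powerset] at hS
    rw [Finset.filter_filter]
    have : (Finset.univ.filter (fun x : Fin n → Fin q =>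
        (T.filter (fun j => x j ≠ u j)).card ≤ s ∧ T.filter (fun j => x j ≠ u j) = S))
        = Finset.univ.filter (fun x : Fin n → Fin q => T.filter (fun j => x j ≠ u j) = S) := by
      apply Finset.filter_congr
      intro x _
      constructor
      · exact fun h => h.2
      · exact fun h => ⟨h ▸ hS.2, h⟩
    rw [this, fiber_card' u S T hS.1]
  rw [Finset.sum_congr rfl hfib]
  -- now sum over filtered powerset
  have hpw : T.powerset.filter (fun S => S.card ≤ s)
      = (Finset.range (s + 1)).biUnion (fun i => T.powersetCard i) := by
    ext S
    simp [Finset.mem_powersetCard, Nat.lt_succ_iff, Finset.mem_powerset]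
    tauto
  rw [hpw, Finset.sum_biUnion]
  · rw [Finset.mul_sum]
    apply Finset.sum_congr rfl
    intro i hi
    have : ∀ S ∈ T.powersetCard i, (q-1)^S.card * q^(n-T.card) = (q-1)^i * q^(n-T.card) := by
      intro S hS
      rw [(Finset.mem_powersetCard.mp hS).2]
    rw [Finset.sum_congr rfl this, Finset.sum_const, Finset.card_powersetCard]
    ring
  · intro a ha b hb hab
    apply Finset.disjoint_left.mpr
    intro S hSa hSb
    exact hab ((Finset.mem_powersetCard.mp hSa).2 ▸ (Finset.mem_powersetCard.mp hSb).2.symm ▸ rfl)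

/-- For `q ≥ 2`, `n ≥ 1`, vectors `u, v ∈ F_q^n` at Hamming distance `1`,
and `t ≥ 1`, the union of the two Hamming balls of radius `t` around `u` and `v` has size
`2 · Σ_{i=0}^{t} C(n,i)(q−1)^i − q · Σ_{i=0}^{t−1} C(n−1,i)(q−1)^i`. -/
theorem card_union_two_balls_dist_one
    {q n : ℕ} (hq : 2 ≤ q) (hn : 1 ≤ n) (t : ℕ) (ht : 1 ≤ t)
    (u v : Fin n → Fin q) (huv : hammingDist u v = 1) :
    Nat.card ({x : Fin n → Fin q | hammingDist x u ≤ t} ∪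
        {x : Fin n → Fin q | hammingDist x v ≤ t} : Set (Fin n → Fin q)) =
      2 * ∑ i ∈ Finset.range (t + 1), n.choose i * (q - 1) ^ i -
        q * ∑ i ∈ Finset.range t, (n - 1).choose i * (q - 1) ^ i := by
  classical
  -- extract the single differing coordinate
  obtain ⟨j0, hj0⟩ : ∃ j0, Finset.univ.filter (fun j => u j ≠ v j) = {j0} :=
    Finset.card_eq_one.mp huv
  have huvj0 : u j0 ≠ v j0 := by
    have : j0 ∈ Finset.univ.filter (fun j => u j ≠ v j) := hj0 ▸ Finset.mem_singleton_self j0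
    exact (Finset.mem_filter.mp this).2
  have heq : ∀ j, j ≠ j0 → u j = v j := by
    intro j hj
    by_contra hne
    have : j ∈ ({j0} : Finset (Fin n)) := hj0 ▸ Finset.mem_filter.mpr ⟨Finset.mem_univ j, hne⟩
    exact hj (Finset.mem_singleton.mp this)
  set Fu := Finset.univ.filter (fun x : Fin n → Fin q => hammingDist x u ≤ t) with hFu
  set Fv := Finset.univ.filter (fun x : Fin n → Fin q => hammingDist x v ≤ t) with hFv
  -- Nat.card to Finset card
  have hcard : Nat.card ({x : Fin n → Fin q | hammingDist x u ≤ t} ∪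
        {x : Fin n → Fin q | hammingDist x v ≤ t} : Set (Fin n → Fin q)) = (Fu ∪ Fv).card := by
    rw [Nat.card_eq_fintype_card, ← Set.toFinset_card]
    congr 1
    rw [Set.toFinset_union]
    congr 1 <;> ext x <;> simp [Fu, Fv]
  rw [hcard]
  -- ball sizes
  have hdist : ∀ (w x : Fin n → Fin q), hammingDist x w
      = (Finset.univ.filter (fun j => x j ≠ w j)).card := fun w x => rfl
  have hFucard : Fu.card = ∑ i ∈ Finset.range (t + 1), n.choose i * (q - 1) ^ i := by
    have := partial_ball_card' u Finset.univ t
    simpa [hdist, Fu] using this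
  have hFvcard : Fv.card = ∑ i ∈ Finset.range (t + 1), n.choose i * (q - 1) ^ i := by
    have := partial_ball_card' v Finset.univ t
    simpa [hdist, Fv] using this
  -- intersection
  have hinter : (Fu ∩ Fv) = Finset.univ.filter (fun x : Fin n → Fin q =>
      ((Finset.univ.erase j0).filter (fun j => x j ≠ u j)).card ≤ t - 1) := by
    rw [hFu, hFv, ← Finset.filter_and]
    apply Finset.filter_congr
    intro x _
    have hxu : hammingDist x u = ((Finset.univ.erase j0).filter (fun j => x j ≠ u j)).card
        + (if x j0 ≠ u j0 then 1 else 0) := by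
      rw [hdist, Finset.card_filter, Finset.card_filter,
        ← Finset.sum_erase_add _ _ (Finset.mem_univ j0)]
    have hxv : hammingDist x v = ((Finset.univ.erase j0).filter (fun j => x j ≠ v j)).card
        + (if x j0 ≠ v j0 then 1 else 0) := by
      rw [hdist, Finset.card_filter, Finset.card_filter,
        ← Finset.sum_erase_add _ _ (Finset.mem_univ j0)]
    have hsame : ((Finset.univ.erase j0).filter (fun j => x j ≠ v j))
        = ((Finset.univ.erase j0).filter (fun j => x j ≠ u j)) := by
      apply Finset.filter_congr
      intro j hj
      rw [heq j (Finset.ne_of_mem_erase hj)]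
    rw [hsame] at hxv
    have hone : 1 ≤ (if x j0 ≠ u j0 then 1 else 0) + (if x j0 ≠ v j0 then 1 else 0) := by
      rcases eq_or_ne (x j0) (u j0) with h1 | h1
      · have h2 : x j0 ≠ v j0 := fun h => huvj0 (h1.symm.trans h)
        rw [if_pos h2]
        omega
      · rw [if_pos h1]
        omega
    have he : (if x j0 ≠ u j0 then 1 else 0) ≤ 1 := by split_ifs <;> omega
    have hg : (if x j0 ≠ v j0 then 1 else 0) ≤ 1 := by split_ifs <;> omega
    constructor
    · intro h
      omega
    · intro h
      refine ⟨by omega, by omega⟩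
  have hintercard : (Fu ∩ Fv).card = q * ∑ i ∈ Finset.range t, (n - 1).choose i * (q - 1) ^ i := by
    rw [hinter, partial_ball_card' u (Finset.univ.erase j0) (t - 1)]
    have hc : (Finset.univ.erase j0).card = n - 1 := by
      rw [Finset.card_erase_of_mem (Finset.mem_univ j0)]
      simp
    have ht1 : t - 1 + 1 = t := by omega
    have hn1 : n - (n - 1) = 1 := by omega
    rw [hc, ht1, hn1, pow_one]
  have hkey := Finset.card_union_add_card_inter Fu Fv
  omega
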